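/- arXiv:2110.01419 — 2 statements merged into one kernel-verified Lean document; each statement's English description precedes it below -/
import Mathlib

section
/- For any two pseudo-differential operators A and B over a differential ring, the residue of the commutator [A,B] = A∘B - B∘A lies in the image of the derivation ∂ₓ; consequently ∫ res[A,B] dx = 0. -/
/-- Generalized binomial coefficient `k(k-1)⋯(k-l+1)/l!` for `k : ℤ`, `l : ℕ`. -/
def zchoose (k : ℤ) (l : ℕ) : ℤ :=
  if 0 ≤ k then (k.toNat).choose l else (-1) ^ l * ((l - 1 - k).toNat).choose l

/-- Composition of pseudo-differential operators `A = Σ aₙ ∂ⁿ`, `B = Σ bₙ ∂ⁿ` (given by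
their coefficient functions `ℤ → R`, supported in degrees bounded above) over a
differential ring `(R, d)`, using the rule
`∂ᵏ ∘ a = Σ_{l≥0} (k(k-1)⋯(k-l+1)/l!) (dˡ a) ∂^{k-l}`. -/
noncomputable def pdoComp {R : Type*} [CommRing R] (d : R → R) (A B : ℤ → R) : ℤ → R :=
  fun n => ∑ᶠ p : ℤ × ℕ, A p.1 * (zchoose p.1 p.2 • d^[p.2] (B (n + p.2 - p.1)))

/-- The formal adjoint `(Σ aₙ ∂ⁿ)† = Σ (-∂)ⁿ ∘ aₙ`. -/
noncomputable def pdoAdj {R : Type*} [CommRing R] (d : R → R) (A : ℤ → R) : ℤ → R :=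
  fun m => ∑ᶠ l : ℕ, ((-1) ^ (m + l).natAbs : ℤ) •
    (zchoose (m + l) l • d^[l] (A (m + l)))

/-- The residue of a pseudo-differential operator: the coefficient of `∂^{-1}`. -/
def pdoRes {R : Type*} [CommRing R] (A : ℤ → R) : R := A (-1)

lemma zchoose_reflect (k : ℤ) (l : ℕ) :
    zchoose ((l : ℤ) - 1 - k) l = (-1) ^ l * zchoose k l := by
  unfold zchoose
  rcases le_or_gt 0 k with hk | hk
  · rcases le_or_gt (l : ℤ) k with hlk | hlk
    · rw [if_neg (by omega), if_pos hk]
      have : ((l : ℤ) - 1 - ((l : ℤ) - 1 - k)).toNat = k.toNat := by omega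
      rw [this]
    · rw [if_pos (by omega), if_pos hk]
      rw [Nat.choose_eq_zero_of_lt (by omega), Nat.choose_eq_zero_of_lt (by omega)]
      simp
  · rw [if_pos (by omega), if_neg (by omega)]
    rw [← mul_assoc, ← mul_pow]
    norm_num

/-- For pseudo-differential operators `A, B` over a commutative differential ring `(R, ∂ₓ)`,
the residue of the commutator `[A,B] = A∘B - B∘A` lies in the image of the derivation
`∂ₓ`; consequently `∫ res[A,B] dx = 0` in the quotient of `R` by the image of `∂ₓ`. -/
theorem pdo_res_commutator_total_derivative {R : Type*} [CommRing R] (d : R → R)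
    (hd0 : d 0 = 0) (hdadd : ∀ a b : R, d (a + b) = d a + d b)
    (hdmul : ∀ a b : R, d (a * b) = d a * b + a * d b)
    (A B : ℤ → R)
    (hA : ∃ m : ℤ, ∀ n : ℤ, m < n → A n = 0)
    (hB : ∃ m : ℤ, ∀ n : ℤ, m < n → B n = 0) :
    pdoRes (fun n => pdoComp d A B n - pdoComp d B A n) ∈ Set.range d := by
  classical
  obtain ⟨mA, hA⟩ := hA
  obtain ⟨mB, hB⟩ := hB
  set D : R →+ R := AddMonoidHom.mk' d hdadd with hD
  have hdsub : ∀ a b : R, d (a - b) = d a - d b := fun a b => D.map_sub a b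
  have hdsmul : ∀ (c : ℤ) (a : R), d (c • a) = c • d a := fun c a => map_zsmul D c a
  have hd0' : ∀ l : ℕ, d^[l] (0 : R) = 0 := by
    intro l
    induction l with
    | zero => rfl
    | succ n ih => rw [Function.iterate_succ_apply', ih, hd0]
  -- telescoping key lemma
  have key : ∀ (l : ℕ) (u v : R),
      ∃ t, d t = u * d^[l] v - ((-1 : ℤ) ^ l) • (d^[l] u * v) := by
    intro l
    induction l with
    | zero => exact fun u v => ⟨0, by simp [hd0]⟩
    | succ n ih =>
      intro u v
      obtain ⟨t, ht⟩ := ih (d u) v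
      refine ⟨u * d^[n] v - t, ?_⟩
      rw [hdsub, hdmul, ht]
      rw [Function.iterate_succ_apply' d n v, Function.iterate_succ_apply d n u]
      simp only [zsmul_eq_mul, Int.cast_pow, Int.cast_neg, Int.cast_one, pow_succ]
      push_cast
      ring
  -- the two coefficient functions at degree -1
  set f : ℤ × ℕ → R :=
    fun p => A p.1 * (zchoose p.1 p.2 • d^[p.2] (B (-1 + (p.2 : ℤ) - p.1))) with hf
  set g : ℤ × ℕ → R :=
    fun p => B p.1 * (zchoose p.1 p.2 • d^[p.2] (A (-1 + (p.2 : ℤ) - p.1))) with hg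
  have hres : pdoRes (fun n => pdoComp d A B n - pdoComp d B A n)
      = (∑ᶠ p, f p) - (∑ᶠ p, g p) := rfl
  set σ : ℤ × ℕ → ℤ × ℕ := fun p => ((p.2 : ℤ) - 1 - p.1, p.2) with hσ
  set S : Finset (ℤ × ℕ) :=
    Finset.Icc (-1 - mB) mA ×ˢ Finset.range (mA + mB + 2).toNat with hS
  have hfS : Function.support f ⊆ ↑S := by
    intro p hp
    have hA1 : A p.1 ≠ 0 := fun h => hp (by simp [hf, h])
    have hB1 : B (-1 + (p.2 : ℤ) - p.1) ≠ 0 := fun h => hp (by simp [hf, h, hd0'])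
    have h1 : p.1 ≤ mA := le_of_not_gt fun h => hA1 (hA _ h)
    have h2 : -1 + (p.2 : ℤ) - p.1 ≤ mB := le_of_not_gt fun h => hB1 (hB _ h)
    simp only [hS, Finset.coe_product, Set.mem_prod, Finset.mem_coe, Finset.mem_Icc,
      Finset.mem_range]
    constructor
    · omega
    · omega
  have hgS : Function.support g ⊆ ↑(S.image σ) := by
    intro p hp
    have hB1 : B p.1 ≠ 0 := fun h => hp (by simp [hg, h])
    have hA1 : A (-1 + (p.2 : ℤ) - p.1) ≠ 0 := fun h => hp (by simp [hg, h, hd0'])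
    have h1 : p.1 ≤ mB := le_of_not_gt fun h => hB1 (hB _ h)
    have h2 : -1 + (p.2 : ℤ) - p.1 ≤ mA := le_of_not_gt fun h => hA1 (hA _ h)
    simp only [Finset.coe_image, Set.mem_image, Finset.mem_coe]
    refine ⟨((p.2 : ℤ) - 1 - p.1, p.2), ?_, ?_⟩
    · simp only [hS, Finset.mem_product, Finset.mem_Icc, Finset.mem_range]
      refine ⟨⟨by omega, by omega⟩, by omega⟩
    · simp only [hσ]
      ext <;> simp
  have hinj : ∀ x ∈ S, ∀ y ∈ S, σ x = σ y → x = y := by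
    intro x _ y _ h
    simp only [hσ, Prod.mk.injEq] at h
    obtain ⟨h1, h2⟩ := h
    ext
    · omega
    · omega
  have hterm : ∀ p : ℤ × ℕ, ∃ t, d t = f p - g (σ p) := by
    rintro ⟨k, l⟩
    obtain ⟨t, ht⟩ := key l (A k) (B ((l : ℤ) - 1 - k))
    refine ⟨zchoose k l • t, ?_⟩
    rw [hdsmul, ht]
    have e1 : (-1 + (l : ℤ) - ((l : ℤ) - 1 - k)) = k := by ring
    have e2 : (-1 + (l : ℤ) - k) = (l : ℤ) - 1 - k := by ring
    simp only [hf, hg, hσ, e1, e2, zchoose_reflect]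
    simp only [zsmul_eq_mul, Int.cast_mul, Int.cast_pow, Int.cast_neg, Int.cast_one]
    ring
  choose t ht using hterm
  refine ⟨∑ p ∈ S, t p, ?_⟩
  have hmap : d (∑ p ∈ S, t p) = ∑ p ∈ S, d (t p) := map_sum D t S
  rw [hmap]
  simp_rw [ht]
  rw [Finset.sum_sub_distrib]
  rw [hres, finsum_eq_finset_sum_of_support_subset f hfS,
    finsum_eq_finset_sum_of_support_subset g hgS, Finset.sum_image hinj]
end

section
/- For the KP Lax operator L and k ≥ 1, the coefficients of the pseudo-differential operator L^k - ∂ₓ^k - Σ_{i≥1} Σ_{l=0}^{k-1} (k choose l) fᵢ^{(k-1-l)} ∂ₓ^{-i+l} are polynomials in the fᵢ^{(j)} with no constant and no linear terms (every monomial has total degree at least 2 in the variables fᵢ^{(j)}). -/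
/-- The differential polynomial ring `ℂ[f_i^{(j)}]` in the variables `f_i^{(j)}`,
`i ≥ 1`, `j ≥ 0` (indexed by pairs `(i,j)`). -/
noncomputable abbrev DPRing : Type := MvPolynomial (ℕ × ℕ) ℂ

/-- The variable `f_i^{(j)}`. -/
noncomputable def fv (i j : ℕ) : DPRing := MvPolynomial.X (i, j)

/-- The derivation `∂ₓ` with `∂ₓ f_i^{(j)} = f_i^{(j+1)}`. -/
noncomputable def Dx : Derivation ℂ DPRing DPRing :=
  MvPolynomial.mkDerivation ℂ (fun p : ℕ × ℕ => MvPolynomial.X (p.1, p.2 + 1))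

/-- The KP Lax operator `L = ∂ₓ + Σ_{i≥1} fᵢ ∂ₓ^{-i}` as a coefficient function. -/
noncomputable def Lop : ℤ → DPRing :=
  fun n => if n = 1 then 1 else if n ≤ -1 then fv (-n).toNat 0 else 0

/-- Powers of a pseudo-differential operator. -/
noncomputable def pdoPow {R : Type*} [CommRing R] (d : R → R) (A : ℤ → R) : ℕ → (ℤ → R)
  | 0 => fun n => if n = 0 then 1 else 0
  | k + 1 => pdoComp d A (pdoPow d A k)

/-- `L^k` as a pseudo-differential operator. -/
noncomputable def Lpow (k : ℕ) : ℤ → DPRing := pdoPow (⇑Dx) Lop k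

/-- The purely differential part `A₊` of a pseudo-differential operator. -/
def pdoPlus {R : Type*} [CommRing R] (A : ℤ → R) : ℤ → R :=
  fun n => if 0 ≤ n then A n else 0

/-- The commutator of two pseudo-differential operators. -/
noncomputable def pdoBracket {R : Type*} [CommRing R] (d : R → R) (A B : ℤ → R) : ℤ → R :=
  fun n => pdoComp d A B n - pdoComp d B A n

/-- `S_{i,2}`: the coefficient of `∂ₓ^{-i}` in `[(L²)₊, L]`, i.e. the second KP flow
`∂fᵢ/∂T₂`. -/
noncomputable def S2 (i : ℕ) : DPRing :=
  pdoBracket (⇑Dx) (pdoPlus (Lpow 2)) Lop (-(i : ℤ))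

/-- The total degree of a monomial (exponent function). -/
def mdeg (m : (ℕ × ℕ) →₀ ℕ) : ℕ := ∑ x ∈ m.support, m x


open MvPolynomial Finset


def DegGE (d : ℕ) (p : DPRing) : Prop := ∀ m ∈ p.support, d ≤ mdeg m

lemma mdeg_add (a b : (ℕ × ℕ) →₀ ℕ) : mdeg (a + b) = mdeg a + mdeg b := by
  simpa [mdeg, Finsupp.sum] using Finsupp.sum_add_index' (M := ℕ) (N := ℕ) (f := a) (g := b)
    (h := fun _ e => e) (fun _ => rfl) (fun _ _ _ => rfl)

lemma degGE_mono {d e : ℕ} (h : e ≤ d) {p : DPRing} (hp : DegGE d p) : DegGE e p :=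
  fun m hm => le_trans h (hp m hm)

lemma degGE_zero (d : ℕ) : DegGE d (0 : DPRing) := by
  intro m hm; simp [MvPolynomial.support_zero] at hm

lemma degGE_add {d : ℕ} {p q : DPRing} (hp : DegGE d p) (hq : DegGE d q) : DegGE d (p + q) := by
  intro m hm
  rcases Finset.mem_union.1 (MvPolynomial.support_add hm) with h | h
  · exact hp m h
  · exact hq m h

lemma degGE_neg {d : ℕ} {p : DPRing} (hp : DegGE d p) : DegGE d (-p) := by
  intro m hm; exact hp m (by simpa using hm)

lemma degGE_smul {S : Type*} [SMulZeroClass S ℂ] {d : ℕ} (c : S) {p : DPRing}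
    (hp : DegGE d p) : DegGE d (c • p) :=
  fun m hm => hp m (MvPolynomial.support_smul hm)

lemma degGE_mul {a b : ℕ} {p q : DPRing} (hp : DegGE a p) (hq : DegGE b q) :
    DegGE (a + b) (p * q) := by
  intro m hm
  have := MvPolynomial.support_mul p q hm
  rcases Finset.mem_add.1 this with ⟨m1, hm1, m2, hm2, rfl⟩
  rw [mdeg_add]
  exact add_le_add (hp m1 hm1) (hq m2 hm2)

lemma degGE_sum {d : ℕ} {ι : Type*} (s : Finset ι) (g : ι → DPRing)
    (h : ∀ i ∈ s, DegGE d (g i)) : DegGE d (∑ i ∈ s, g i) := by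
  classical
  induction s using Finset.induction_on with
  | empty => simpa using degGE_zero d
  | insert x s hx ih =>
    rw [Finset.sum_insert hx]
    exact degGE_add (h _ (Finset.mem_insert_self _ _))
      (ih fun i hi => h i (Finset.mem_insert_of_mem hi))

lemma degGE_finsum {d : ℕ} {ι : Type*} (g : ι → DPRing) (h : ∀ i, DegGE d (g i)) :
    DegGE d (∑ᶠ i, g i) := by
  classical
  by_cases hf : (Function.support g).Finite
  · rw [finsum_eq_sum g hf]
    exact degGE_sum _ _ fun i _ => h i
  · rw [finsum_of_infinite_support hf]
    exact degGE_zero d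

lemma degGE_X (v : ℕ × ℕ) : DegGE 1 (MvPolynomial.X v : DPRing) := by
  intro m hm
  rw [MvPolynomial.support_X] at hm
  simp only [Finset.mem_singleton] at hm
  subst hm
  rw [mdeg, Finsupp.support_single_ne_zero _ one_ne_zero]
  simp

lemma degGE_fv (i j : ℕ) : DegGE 1 (fv i j) := degGE_X _

lemma degGE_pow {a : ℕ} {p : DPRing} (hp : DegGE a p) (e : ℕ) : DegGE (e * a) (p ^ e) := by
  induction e with
  | zero => intro m hm; simp
  | succ e ih =>
    have h : (e + 1) * a = e * a + a := by ring
    rw [h, pow_succ]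
    exact degGE_mul ih hp

lemma degGE_monomial (m : (ℕ × ℕ) →₀ ℕ) (c : ℂ) : DegGE (mdeg m) (MvPolynomial.monomial m c) := by
  intro m' hm'
  rcases MvPolynomial.support_monomial_subset hm' with h
  simp only [Finset.mem_singleton] at h
  subst h; exact le_refl _

lemma dx_monomial_degGE (m : (ℕ × ℕ) →₀ ℕ) : ∀ c : ℂ, DegGE (mdeg m) (Dx (MvPolynomial.monomial m c)) := by
  induction m using Finsupp.induction with
  | zero =>
    intro c
    have : (MvPolynomial.monomial (0 : (ℕ × ℕ) →₀ ℕ) c : DPRing) = MvPolynomial.C c :=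
      (MvPolynomial.C_apply (a := c)).symm
    rw [this]
    have : Dx (MvPolynomial.C c : DPRing) = 0 := by
      have := Dx.map_algebraMap c
      simpa [MvPolynomial.algebraMap_eq] using this
    rw [this]; exact degGE_zero _
  | single_add a b f hfa hb ih =>
    intro c
    have hmono : (MvPolynomial.monomial (Finsupp.single a b + f) c : DPRing)
        = MvPolynomial.X a ^ b * MvPolynomial.monomial f c := by
      rw [MvPolynomial.X_pow_eq_monomial, MvPolynomial.monomial_mul, one_mul]
    rw [hmono, Derivation.leibniz, Derivation.leibniz_pow]
    have hXa : Dx (MvPolynomial.X a : DPRing) = MvPolynomial.X (a.1, a.2 + 1) :=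
      MvPolynomial.mkDerivation_X _ _ _
    have hdeg : mdeg (Finsupp.single a b + f) = b + mdeg f := by
      rw [mdeg_add]
      congr 1
      simp [mdeg, Finsupp.support_single_ne_zero _ hb]
    rw [hdeg]
    apply degGE_add
    · -- X a ^ b • Dx (monomial f c)
      rw [smul_eq_mul]
      have := degGE_mul (degGE_pow (degGE_X a) b) (ih c)
      simpa [mul_one] using this
    · -- monomial f c • (b • X a ^ (b-1) • Dx (X a))
      rw [smul_eq_mul, hXa]
      have h1 : DegGE (b - 1) ((MvPolynomial.X a : DPRing) ^ (b - 1)) := by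
        simpa [mul_one] using degGE_pow (degGE_X a) (b - 1)
      have h2 : DegGE ((b - 1) + 1)
          ((b : ℕ) • ((MvPolynomial.X a : DPRing) ^ (b - 1) • MvPolynomial.X (a.1, a.2 + 1))) := by
        apply degGE_smul
        rw [smul_eq_mul]
        exact degGE_mul h1 (degGE_X _)
      have h3 := degGE_mul (degGE_monomial f c) h2
      have : mdeg f + ((b - 1) + 1) = b + mdeg f := by omega
      rw [this] at h3
      exact h3

lemma degGE_dx {d : ℕ} {p : DPRing} (hp : DegGE d p) : DegGE d (Dx p) := by
  classical
  have hsum : p = ∑ m ∈ p.support, MvPolynomial.monomial m (MvPolynomial.coeff m p) :=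
    (MvPolynomial.support_sum_monomial_coeff p).symm
  rw [hsum, map_sum]
  apply degGE_sum
  intro m hm
  exact degGE_mono (hp m hm) (dx_monomial_degGE m _)

lemma degGE_dxIter {d : ℕ} {p : DPRing} (hp : DegGE d p) (j : ℕ) : DegGE d (Dx^[j] p) := by
  induction j generalizing p with
  | zero => simpa using hp
  | succ j ih => rw [Function.iterate_succ_apply]; exact ih (degGE_dx hp)


noncomputable def Del (k : ℕ) : ℤ → DPRing := fun n => if n = (k : ℤ) then 1 else 0
noncomputable def Fp : ℤ → DPRing := fun n => if n ≤ -1 then fv (-n).toNat 0 else 0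
noncomputable def fvI (z : ℤ) (j : ℕ) : DPRing := if 1 ≤ z then fv z.toNat j else 0
noncomputable def Lin (k : ℕ) : ℤ → DPRing := fun n =>
  ∑ l ∈ Finset.range k, (if 1 ≤ (l : ℤ) - n then
    (k.choose l : ℂ) • fv ((l - n).toNat) (k - 1 - l) else 0)

lemma zchoose_zero (z : ℤ) : zchoose z 0 = 1 := by
  unfold zchoose; split <;> simp

lemma zchoose_one (l : ℕ) : zchoose 1 l = (Nat.choose 1 l : ℤ) := by
  unfold zchoose; simp

lemma dxIter_zero (j : ℕ) : Dx^[j] (0 : DPRing) = 0 :=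
  Function.iterate_fixed (by simp) j

lemma dxIter_add (j : ℕ) (a b : DPRing) : Dx^[j] (a + b) = Dx^[j] a + Dx^[j] b := by
  induction j generalizing a b with
  | zero => simp
  | succ j ih => rw [Function.iterate_succ_apply, Function.iterate_succ_apply,
      Function.iterate_succ_apply, map_add, ih]

lemma Dx_one : Dx (1 : DPRing) = 0 := Derivation.map_one_eq_zero Dx

lemma dxIter_Del (j : ℕ) (hj : j ≠ 0) (k : ℕ) (m : ℤ) : Dx^[j] (Del k m) = 0 := by
  obtain ⟨j, rfl⟩ := Nat.exists_eq_succ_of_ne_zero hj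
  rw [Function.iterate_succ_apply]
  have : Dx (Del k m) = 0 := by
    unfold Del; split
    · exact Dx_one
    · simp
  rw [this, dxIter_zero]

lemma Lin_eq (k : ℕ) (n : ℤ) :
    Lin k n = ∑ l ∈ Finset.range k, (k.choose l : ℂ) • fvI ((l : ℤ) - n) (k - 1 - l) := by
  unfold Lin fvI
  refine Finset.sum_congr rfl fun l _ => ?_
  split <;> simp

lemma Dx_fvI (z : ℤ) (j : ℕ) : Dx (fvI z j) = fvI z (j + 1) := by
  unfold fvI
  split
  · exact MvPolynomial.mkDerivation_X _ _ _
  · simp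

lemma Dx_Lin (k : ℕ) (n : ℤ) :
    Dx (Lin k n) = ∑ l ∈ Finset.range k, (k.choose l : ℂ) • fvI ((l : ℤ) - n) (k - l) := by
  rw [Lin_eq, map_sum]
  refine Finset.sum_congr rfl fun l hl => ?_
  rw [Dx.map_smul, Dx_fvI]
  congr 2
  have := Finset.mem_range.1 hl
  omega

lemma Lin_eq_zero {k : ℕ} {n : ℤ} (h : (k : ℤ) ≤ n) : Lin k n = 0 := by
  unfold Lin
  refine Finset.sum_eq_zero fun l hl => ?_
  have := Finset.mem_range.1 hl
  rw [if_neg (by omega)]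

lemma Del_eq_zero {k : ℕ} {n : ℤ} (h : n ≠ (k : ℤ)) : Del k n = 0 := if_neg h

lemma Lop_eq_zero {n : ℤ} (h : 1 < n) : Lop n = 0 := by
  unfold Lop; rw [if_neg (by omega), if_neg (by omega)]

lemma Lpow_eq_zero (k : ℕ) : ∀ n : ℤ, (k : ℤ) < n → Lpow k n = 0 := by
  induction k with
  | zero =>
    intro n hn
    show (if n = 0 then (1:DPRing) else 0) = 0
    rw [if_neg (by omega)]
  | succ k ih =>
    intro n hn
    show pdoComp (⇑Dx) Lop (Lpow k) n = 0
    unfold pdoComp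
    have hz : ∀ p : ℤ × ℕ,
        Lop p.1 * (zchoose p.1 p.2 • Dx^[p.2] (Lpow k (n + p.2 - p.1))) = 0 := by
      intro p
      by_cases h1 : 1 < p.1
      · rw [Lop_eq_zero h1, zero_mul]
      · rw [ih (n + p.2 - p.1) (by push_cast; omega), dxIter_zero, smul_zero, mul_zero]
    rw [show (fun p : ℤ × ℕ =>
        Lop p.1 * (zchoose p.1 p.2 • Dx^[p.2] (Lpow k (n + p.2 - p.1)))) = fun _ => (0:DPRing)
      from funext hz]
    exact finsum_zero

lemma Lop_split (a : ℤ) : Lop a = Del 1 a + Fp a := by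
  unfold Lop Del Fp
  push_cast
  split_ifs with h1 h2 h3 <;> first | omega | ring

lemma fvI_congr {z z' : ℤ} {j j' : ℕ} (hz : z = z') (hj : j = j') : fvI z j = fvI z' j' := by
  rw [hz, hj]

lemma lin_rec (k : ℕ) (n : ℤ) :
    Lin (k + 1) n = Lin k (n - 1) + Dx (Lin k n) + fvI ((k : ℤ) - n) 0 := by
  cases k with
  | zero =>
    rw [Lin_eq, Lin_eq]
    norm_num [Finset.sum_range_one, Dx_Lin]
  | succ K =>
    have hL : Lin (K + 1 + 1) n
        = (∑ l ∈ Finset.range (K + 1),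
            ((K + 2).choose (l + 1) : ℂ) • fvI ((l : ℤ) + 1 - n) (K - l))
          + fvI (0 - n) (K + 1) := by
      rw [Lin_eq, Finset.sum_range_succ']
      congr 1
      · refine Finset.sum_congr rfl fun l hl => ?_
        refine congrArg₂ (· • ·) (by norm_num) (fvI_congr (by push_cast; ring) (by omega))
      · norm_num
    have hP : ∀ l ∈ Finset.range (K + 1),
        ((K + 2).choose (l + 1) : ℂ) • fvI ((l : ℤ) + 1 - n) (K - l)
        = ((K + 1).choose l : ℂ) • fvI ((l : ℤ) + 1 - n) (K - l)
          + ((K + 1).choose (l + 1) : ℂ) • fvI ((l : ℤ) + 1 - n) (K - l) := by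
      intro l _
      rw [← add_smul]
      congr 1
      have : (K + 2).choose (l + 1) = (K + 1).choose l + (K + 1).choose (l + 1) := by
        simpa using Nat.choose_succ_succ (K + 1) l
      rw [this]; push_cast; ring
    have hsplit2 : ∑ l ∈ Finset.range (K + 1),
          ((K + 2).choose (l + 1) : ℂ) • fvI ((l : ℤ) + 1 - n) (K - l)
        = (∑ l ∈ Finset.range (K + 1), ((K + 1).choose l : ℂ) • fvI ((l : ℤ) + 1 - n) (K - l))
          + ∑ l ∈ Finset.range (K + 1),
              ((K + 1).choose (l + 1) : ℂ) • fvI ((l : ℤ) + 1 - n) (K - l) := by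
      rw [← Finset.sum_add_distrib]; exact Finset.sum_congr rfl hP
    have h1 : Lin (K + 1) (n - 1)
        = ∑ l ∈ Finset.range (K + 1), ((K + 1).choose l : ℂ) • fvI ((l : ℤ) + 1 - n) (K - l) := by
      rw [Lin_eq]
      refine Finset.sum_congr rfl fun l hl => ?_
      exact congrArg₂ (· • ·) rfl (fvI_congr (by ring) (by omega))
    have h2 : Dx (Lin (K + 1) n)
        = (∑ l ∈ Finset.range K, ((K + 1).choose (l + 1) : ℂ) • fvI ((l : ℤ) + 1 - n) (K - l))
          + fvI (0 - n) (K + 1) := by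
      rw [Dx_Lin, Finset.sum_range_succ']
      congr 1
      · refine Finset.sum_congr rfl fun l hl => ?_
        exact congrArg₂ (· • ·) rfl (fvI_congr (by push_cast; ring) (by omega))
      · norm_num
    have h3 : ∑ l ∈ Finset.range (K + 1),
          ((K + 1).choose (l + 1) : ℂ) • fvI ((l : ℤ) + 1 - n) (K - l)
        = (∑ l ∈ Finset.range K, ((K + 1).choose (l + 1) : ℂ) • fvI ((l : ℤ) + 1 - n) (K - l))
          + fvI ((K : ℤ) + 1 - n) 0 := by
      rw [Finset.sum_range_succ]
      congr 1
      norm_num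
    rw [hL, hsplit2, h3, ← h1, h2]
    push_cast
    ring

noncomputable def Qr (k : ℕ) : ℤ → DPRing := fun a => Lpow k a - Del k a - Lin k a

noncomputable def gg (n : ℤ) (X Y : ℤ → DPRing) : ℤ × ℕ → DPRing := fun p =>
  X p.1 * (zchoose p.1 p.2 • Dx^[p.2] (Y (n + p.2 - p.1)))

lemma degGE_fvI (z : ℤ) (j : ℕ) : DegGE 1 (fvI z j) := by
  unfold fvI; split
  · exact degGE_fv _ _
  · exact degGE_zero _

lemma degGE_Fp (a : ℤ) : DegGE 1 (Fp a) := by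
  unfold Fp; split
  · exact degGE_fv _ _
  · exact degGE_zero _

lemma degGE_Lin (k : ℕ) (a : ℤ) : DegGE 1 (Lin k a) := by
  rw [Lin_eq]
  exact degGE_sum _ _ fun l _ => degGE_smul _ (degGE_fvI _ _)

lemma degGE_zeroLe (p : DPRing) : DegGE 0 p := fun m _ => Nat.zero_le _

lemma support_gg_subset (n : ℤ) (k : ℕ) (X Y : ℤ → DPRing)
    (hX : ∀ a, 1 < a → X a = 0) (hY : ∀ a, (k : ℤ) < a → Y a = 0) :
    Function.support (gg n X Y) ⊆
      ↑((Finset.Icc (n - k) 1) ×ˢ Finset.range ((k + 2 - n).toNat)) := by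
  intro p hp
  simp only [Function.mem_support] at hp
  have h1 : ¬ (1 < p.1) := fun h => hp (by simp [gg, hX _ h])
  have h2 : ¬ ((k : ℤ) < n + p.2 - p.1) := fun h => hp (by simp [gg, hY _ h, dxIter_zero])
  push_neg at h1 h2
  simp only [Finset.coe_product, Set.mem_prod, Finset.mem_coe, Finset.mem_Icc,
    Finset.mem_range]
  have hp2 : (0 : ℤ) ≤ (p.2 : ℤ) := Int.natCast_nonneg _
  refine ⟨⟨by omega, h1⟩, by omega⟩

lemma main_ind : ∀ (k : ℕ) (n : ℤ), DegGE 2 (Lpow k n - Del k n - Lin k n) := by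
  intro k
  induction k with
  | zero =>
    intro n
    have h1 : Lpow 0 n = Del 0 n := by
      show (if n = 0 then (1 : DPRing) else 0) = _
      unfold Del; norm_num
    have h2 : Lin 0 n = 0 := by unfold Lin; simp
    rw [h1, h2]
    simpa using degGE_zero 2
  | succ k ih =>
    intro n
    classical
    have hQdeg : ∀ a, DegGE 2 (Qr k a) := fun a => ih a
    have hQz : ∀ a, (k : ℤ) < a → Qr k a = 0 := by
      intro a ha
      unfold Qr
      rw [Lpow_eq_zero k a ha, Del_eq_zero (by omega), Lin_eq_zero (le_of_lt ha)]
      ring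
    have hXD : ∀ a, 1 < a → Del 1 a = 0 := fun a h => Del_eq_zero (by push_cast; omega)
    have hXF : ∀ a, 1 < a → Fp a = 0 := fun a h => if_neg (by omega)
    have hYD : ∀ a, (k : ℤ) < a → Del k a = 0 := fun a h => Del_eq_zero (by omega)
    have hYL : ∀ a, (k : ℤ) < a → Lin k a = 0 := fun a h => Lin_eq_zero (le_of_lt h)
    set T : Finset (ℤ × ℕ) := (Finset.Icc (n - k) 1) ×ˢ Finset.range ((k + 2 - n).toNat)
      with hT
    have fin1 : (Function.support (gg n (Del 1) (Del k))).Finite :=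
      Set.Finite.subset T.finite_toSet (support_gg_subset n k _ _ hXD hYD)
    have fin2 : (Function.support (gg n (Del 1) (Lin k))).Finite :=
      Set.Finite.subset T.finite_toSet (support_gg_subset n k _ _ hXD hYL)
    have fin3 : (Function.support (gg n (Del 1) (Qr k))).Finite :=
      Set.Finite.subset T.finite_toSet (support_gg_subset n k _ _ hXD hQz)
    have fin4 : (Function.support (gg n Fp (Del k))).Finite :=
      Set.Finite.subset T.finite_toSet (support_gg_subset n k _ _ hXF hYD)
    have fin5 : (Function.support (gg n Fp (Lin k))).Finite :=
      Set.Finite.subset T.finite_toSet (support_gg_subset n k _ _ hXF hYL)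
    have fin6 : (Function.support (gg n Fp (Qr k))).Finite :=
      Set.Finite.subset T.finite_toSet (support_gg_subset n k _ _ hXF hQz)
    have hsplit : ∀ p : ℤ × ℕ, gg n Lop (Lpow k) p =
        gg n (Del 1) (Del k) p + gg n (Del 1) (Lin k) p + gg n (Del 1) (Qr k) p
        + (gg n Fp (Del k) p + gg n Fp (Lin k) p + gg n Fp (Qr k) p) := by
      intro p
      have hB : Lpow k (n + p.2 - p.1)
          = Del k (n + p.2 - p.1) + Lin k (n + p.2 - p.1) + Qr k (n + p.2 - p.1) := by
        unfold Qr; ring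
      simp only [gg, Lop_split, hB, dxIter_add, smul_add, mul_add, add_mul]
      ring
    have hLp : Lpow (k + 1) n = ∑ᶠ p : ℤ × ℕ, gg n Lop (Lpow k) p := rfl
    have hsum : (∑ᶠ p : ℤ × ℕ, gg n Lop (Lpow k) p) =
        ((∑ᶠ p : ℤ × ℕ, gg n (Del 1) (Del k) p) + (∑ᶠ p : ℤ × ℕ, gg n (Del 1) (Lin k) p)
          + (∑ᶠ p : ℤ × ℕ, gg n (Del 1) (Qr k) p))
        + ((∑ᶠ p : ℤ × ℕ, gg n Fp (Del k) p) + (∑ᶠ p : ℤ × ℕ, gg n Fp (Lin k) p)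
          + (∑ᶠ p : ℤ × ℕ, gg n Fp (Qr k) p)) := by
      rw [finsum_congr hsplit]
      rw [finsum_add_distrib
        (Set.Finite.subset (Set.Finite.union (Set.Finite.union fin1 fin2) fin3)
          (Function.support_add _ _ |>.trans
            (Set.union_subset_union (Function.support_add _ _) subset_rfl)))
        (Set.Finite.subset (Set.Finite.union (Set.Finite.union fin4 fin5) fin6)
          (Function.support_add _ _ |>.trans
            (Set.union_subset_union (Function.support_add _ _) subset_rfl)))]
      congr 1
      · rw [finsum_add_distrib
          (Set.Finite.subset (Set.Finite.union fin1 fin2) (Function.support_add _ _))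
          fin3, finsum_add_distrib fin1 fin2]
      · rw [finsum_add_distrib
          (Set.Finite.subset (Set.Finite.union fin4 fin5) (Function.support_add _ _))
          fin6, finsum_add_distrib fin4 fin5]
    have E1 : (∑ᶠ p : ℤ × ℕ, gg n (Del 1) (Del k) p) = Del (k + 1) n := by
      rw [finsum_eq_single _ ((1 : ℤ), (0 : ℕ))]
      · show Del 1 1 * (zchoose 1 0 • Dx^[0] (Del k (n + (0:ℕ) - 1))) = _
        rw [zchoose_zero]
        have h11 : Del 1 1 = 1 := if_pos (by norm_num)
        rw [h11, one_mul, one_smul, Function.iterate_zero_apply]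
        unfold Del
        push_cast
        split_ifs with h1 h2 h2 <;> first | rfl | omega
      · intro p hp
        by_cases h1 : p.1 = 1
        · have h2 : p.2 ≠ 0 := fun h => hp (by rw [← h1, ← h])
          show Del 1 p.1 * (zchoose p.1 p.2 • Dx^[p.2] (Del k (n + p.2 - p.1))) = 0
          rw [dxIter_Del _ h2, smul_zero, mul_zero]
        · show Del 1 p.1 * (zchoose p.1 p.2 • Dx^[p.2] (Del k (n + p.2 - p.1))) = 0
          rw [Del_eq_zero (by push_cast; omega), zero_mul]
    have E2 : (∑ᶠ p : ℤ × ℕ, gg n (Del 1) (Lin k) p) = Lin k (n - 1) + Dx (Lin k n) := by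
      rw [finsum_eq_sum_of_support_subset _
        (s := ({((1 : ℤ), (0 : ℕ)), ((1 : ℤ), (1 : ℕ))} : Finset (ℤ × ℕ))) ?_]
      · rw [Finset.sum_pair (by simp)]
        have h11 : Del 1 1 = 1 := if_pos (by norm_num)
        show Del 1 1 * (zchoose 1 0 • Dx^[0] (Lin k (n + (0:ℕ) - 1)))
          + Del 1 1 * (zchoose 1 1 • Dx^[1] (Lin k (n + (1:ℕ) - 1))) = _
        rw [h11, zchoose_zero, zchoose_one]
        norm_num
      · intro p hp
        simp only [Function.mem_support] at hp
        have h1 : p.1 = 1 := by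
          by_contra h
          exact hp (by show Del 1 p.1 * _ = 0; rw [Del_eq_zero (by push_cast; omega), zero_mul])
        have h2 : p.2 ≤ 1 := by
          by_contra h
          push_neg at h
          refine hp ?_
          show Del 1 p.1 * (zchoose p.1 p.2 • _) = 0
          rw [h1, zchoose_one, Nat.choose_eq_zero_of_lt h]
          simp
        simp only [Finset.coe_insert, Finset.coe_singleton, Set.mem_insert_iff,
          Set.mem_singleton_iff]
        rcases Nat.le_one_iff_eq_zero_or_eq_one.1 h2 with h | h
        · left; rw [← h1, ← h]
        · right; rw [← h1, ← h]
    have E4 : (∑ᶠ p : ℤ × ℕ, gg n Fp (Del k) p) = fvI ((k : ℤ) - n) 0 := by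
      rw [finsum_eq_single _ ((n - k : ℤ), (0 : ℕ))]
      · show Fp (n - k) * (zchoose (n - k) 0 • Dx^[0] (Del k (n + (0:ℕ) - (n - k)))) = _
        rw [zchoose_zero, one_smul, Function.iterate_zero_apply]
        have harg : n + ((0:ℕ) : ℤ) - (n - k) = (k : ℤ) := by push_cast; ring
        rw [harg]
        have hDel : Del k (k : ℤ) = 1 := if_pos rfl
        rw [hDel, mul_one]
        unfold Fp fvI
        split_ifs with h1 h2 h2 <;> first | (congr 2; omega) | rfl | omega
      · intro p hp
        by_cases h2 : p.2 = 0
        · have h1 : p.1 ≠ n - k := fun h => hp (by rw [← h, ← h2])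
          show Fp p.1 * (zchoose p.1 p.2 • Dx^[p.2] (Del k (n + p.2 - p.1))) = 0
          rw [h2, Del_eq_zero (by push_cast at h1 ⊢; omega)]
          simp
        · show Fp p.1 * (zchoose p.1 p.2 • Dx^[p.2] (Del k (n + p.2 - p.1))) = 0
          rw [dxIter_Del _ h2, smul_zero, mul_zero]
    have D3 : DegGE 2 (∑ᶠ p : ℤ × ℕ, gg n (Del 1) (Qr k) p) := by
      refine degGE_finsum _ fun p => ?_
      have := degGE_mul (degGE_zeroLe (Del 1 p.1))
        (degGE_smul (zchoose p.1 p.2) (degGE_dxIter (hQdeg (n + p.2 - p.1)) p.2))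
      exact this
    have D5 : DegGE 2 (∑ᶠ p : ℤ × ℕ, gg n Fp (Lin k) p) := by
      refine degGE_finsum _ fun p => ?_
      exact degGE_mul (degGE_Fp p.1)
        (degGE_smul (zchoose p.1 p.2) (degGE_dxIter (degGE_Lin k _) p.2))
    have D6 : DegGE 2 (∑ᶠ p : ℤ × ℕ, gg n Fp (Qr k) p) := by
      refine degGE_finsum _ fun p => ?_
      exact degGE_mul (degGE_Fp p.1)
        (degGE_smul (zchoose p.1 p.2)
          (degGE_dxIter (degGE_mono (e := 1) (by norm_num) (hQdeg (n + p.2 - p.1))) p.2))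
    have key : Lpow (k + 1) n - Del (k + 1) n - Lin (k + 1) n =
        (∑ᶠ p : ℤ × ℕ, gg n (Del 1) (Qr k) p) + (∑ᶠ p : ℤ × ℕ, gg n Fp (Lin k) p)
          + (∑ᶠ p : ℤ × ℕ, gg n Fp (Qr k) p) := by
      rw [hLp, hsum, E1, E2, E4, lin_rec]
      ring
    rw [key]
    exact degGE_add (degGE_add D3 D5) D6


/-- For `k ≥ 1`, every coefficient of
`L^k - ∂ₓ^k - Σ_{i≥1} Σ_{l=0}^{k-1} (k choose l) fᵢ^{(k-1-l)} ∂ₓ^{-i+l}`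
is a differential polynomial all of whose monomials have total degree at least `2`
in the variables `fᵢ^{(j)}`. -/
theorem Lpow_remainder_quadratic (k : ℕ) (hk : 1 ≤ k) :
    ∀ n : ℤ, ∀ m ∈ (Lpow k n - (if n = (k : ℤ) then 1 else 0) -
        ∑ l ∈ Finset.range k, (if 1 ≤ (l : ℤ) - n then
          (k.choose l : ℂ) • fv ((l - n).toNat) (k - 1 - l) else 0)).support,
      2 ≤ mdeg m := by
  intro n
  have h := main_ind k n
  unfold DegGE Del Lin at h
  exact h
end
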